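/- Let A be a countable nonempty alphabet, let (μⁱ)_{i≥1} be a sequence of probability mass functions on A, and let Z be a set of positions over A. If ∑'_{p = ⟨a₁,a₂,…,a_n⟩ ∈ Z} ∏_{i=1}^{⌊n/2⌋} μⁱ(a_{2i}) < 1, then Player 2 has a winning strategy for Z. -/

import Mathlib

open scoped ENNReal

variable {A : Type*}

/-- A position `p` is a prefix of the play `x`. -/
def PrefixOfPlay (p : List A) (x : ℕ → A) : Prop :=
  List.ofFn (fun i : Fin p.length => x i) = p

/-- The play `x` is consistent with the Player 1 strategy `s₁`. -/
def Consistent1 (s₁ : List A → A) (x : ℕ → A) : Prop :=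
  ∀ n : ℕ, x (2 * n) = s₁ (List.ofFn (fun i : Fin (2 * n) => x i))

/-- The play `x` is consistent with the Player 2 strategy `s₂`. -/
def Consistent2 (s₂ : List A → A) (x : ℕ → A) : Prop :=
  ∀ n : ℕ, x (2 * n + 1) = s₂ (List.ofFn (fun i : Fin (2 * n + 1) => x i))

/-- Player 1 has a winning strategy for the open set determined by `Z`. -/
def P1Wins (Z : Set (List A)) : Prop :=
  ∃ s₁ : List A → A, ∀ x : ℕ → A, Consistent1 s₁ x → ∃ p ∈ Z, PrefixOfPlay p x

/-- Player 2 has a winning strategy for the open set determined by `Z`. -/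
def P2Wins (Z : Set (List A)) : Prop :=
  ∃ s₂ : List A → A, ∀ x : ℕ → A, Consistent2 s₂ x → ¬ ∃ p ∈ Z, PrefixOfPlay p x


section Aux

noncomputable def wgt (μ : ℕ → A → NNReal) (m : ℕ) (p : List A) : ℝ≥0∞ :=
  ∏ i : Fin (p.length / 2),
    if m ≤ (i : ℕ) then
      (μ i (p.get ⟨2 * (i : ℕ) + 1, by have := i.isLt; omega⟩) : ℝ≥0∞) else 1

noncomputable def Vv (μ : ℕ → A → NNReal) (Z : Set (List A)) (q : List A) : ℝ≥0∞ :=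
  ∑' p : {p : List A // p ∈ Z ∧ q <+: p}, wgt μ (q.length / 2) p.1

theorem wgt_self (μ : ℕ → A → NNReal) (p : List A) : wgt μ (p.length / 2) p = 1 := by
  refine Finset.prod_eq_one fun i _ => if_neg (Nat.not_le.2 i.isLt)

theorem wgt_split (μ : ℕ → A → NNReal) (m : ℕ) (p : List A) (h : m < p.length / 2) :
    wgt μ m p =
      (μ m (p.get ⟨2 * m + 1, by omega⟩) : ℝ≥0∞) * wgt μ (m + 1) p := by
  unfold wgt
  rw [← Finset.mul_prod_erase Finset.univ _ (Finset.mem_univ (⟨m, h⟩ : Fin (p.length / 2)))]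
  rw [← Finset.mul_prod_erase Finset.univ
      (fun i : Fin (p.length / 2) => if m + 1 ≤ (i : ℕ) then
        (μ i (p.get ⟨2 * (i : ℕ) + 1, by have := i.isLt; omega⟩) : ℝ≥0∞) else 1)
      (Finset.mem_univ (⟨m, h⟩ : Fin (p.length / 2)))]
  simp only [Fin.val_mk]
  rw [if_pos le_rfl, if_neg (by omega), one_mul]
  congr 1
  refine Finset.prod_congr rfl fun i hi => ?_
  have hne : (i : ℕ) ≠ m := fun he => by
    exact (Finset.mem_erase.1 hi).1 (Fin.ext he)
  by_cases hc : m ≤ (i : ℕ)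
  · rw [if_pos hc, if_pos (by omega)]
  · rw [if_neg hc, if_neg (by omega)]

theorem get_of_concat_prefix {q p : List A} {a : A} (h : q ++ [a] <+: p) :
    p.get ⟨q.length, by have := h.length_le; simp at this; omega⟩ = a := by
  have h1 := h.getElem (i := q.length) (by simp)
  simp only [List.get_eq_getElem]
  rw [← h1]
  simp

theorem Vv_append_le (μ : ℕ → A → NNReal) (Z : Set (List A)) (q : List A) (a : A)
    (hq : q.length % 2 = 0) : Vv μ Z (q ++ [a]) ≤ Vv μ Z q := by
  have hlen : (q ++ [a]).length / 2 = q.length / 2 := by simp; omega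
  unfold Vv
  rw [hlen]
  exact ENNReal.tsum_comp_le_tsum_of_injective
    (f := fun p : {p : List A // p ∈ Z ∧ q ++ [a] <+: p} =>
      (⟨p.1, p.2.1, (List.prefix_append q [a]).trans p.2.2⟩ : {p : List A // p ∈ Z ∧ q <+: p}))
    (by rintro ⟨p, hp⟩ ⟨p', hp'⟩ hpp
        simp only [Subtype.mk.injEq] at hpp ⊢
        exact hpp)
    (fun p => wgt μ (q.length / 2) p.1)

theorem Vv_ge_one (μ : ℕ → A → NNReal) (Z : Set (List A)) (q : List A) (hq : q ∈ Z) :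
    1 ≤ Vv μ Z q := by
  have := ENNReal.le_tsum (f := fun p : {p : List A // p ∈ Z ∧ q <+: p} =>
    wgt μ (q.length / 2) p.1) ⟨q, hq, List.prefix_refl q⟩
  rw [wgt_self] at this
  exact this

theorem sum_le_Vv_odd (μ : ℕ → A → NNReal) (Z : Set (List A)) (q : List A) (n : ℕ)
    (hq : q.length = 2 * n + 1) :
    ∑' a : A, (μ n a : ℝ≥0∞) * Vv μ Z (q ++ [a]) ≤ Vv μ Z q := by
  have hl : ∀ a : A, (q ++ [a]).length / 2 = n + 1 := fun a => by simp [hq]; omega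
  have hget : ∀ (a : A) (p : {p : List A // p ∈ Z ∧ q ++ [a] <+: p}),
      p.1.get ⟨2 * n + 1, by have := p.2.2.length_le; simp [hq] at this; omega⟩ = a := by
    intro a p
    have := get_of_concat_prefix p.2.2
    simpa [hq] using this
  calc ∑' a : A, (μ n a : ℝ≥0∞) * Vv μ Z (q ++ [a])
      = ∑' a : A, ∑' p : {p : List A // p ∈ Z ∧ q ++ [a] <+: p}, wgt μ n p.1 := by
        refine tsum_congr fun a => ?_
        rw [Vv, hl a, ← ENNReal.tsum_mul_left]
        refine tsum_congr fun p => ?_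
        have hlen : 2 * n + 2 ≤ p.1.length := by
          have := p.2.2.length_le; simp [hq] at this; omega
        rw [wgt_split μ n p.1 (by omega), hget a p]
    _ = ∑' x : (Σ a : A, {p : List A // p ∈ Z ∧ q ++ [a] <+: p}), wgt μ n x.2.1 :=
        (ENNReal.tsum_sigma _).symm
    _ ≤ ∑' p : {p : List A // p ∈ Z ∧ q <+: p}, wgt μ n p.1 := by
        refine ENNReal.tsum_comp_le_tsum_of_injective
          (f := fun x : (Σ a : A, {p : List A // p ∈ Z ∧ q ++ [a] <+: p}) =>
            (⟨x.2.1, x.2.2.1, (List.prefix_append q [x.1]).trans x.2.2.2⟩ :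
              {p : List A // p ∈ Z ∧ q <+: p})) ?_ (fun p => wgt μ n p.1)
        rintro ⟨a, p⟩ ⟨a', p'⟩ hxy
        have hval : p.1 = p'.1 := congrArg Subtype.val hxy
        have haa : a = a' := by
          rw [← hget a p, ← hget a' p']
          simp only [List.get_eq_getElem]
          exact List.getElem_of_eq hval _
        subst haa
        exact congrArg (Sigma.mk a) (Subtype.ext hval)
    _ = Vv μ Z q := by
        rw [Vv, hq]
        have h2 : (2 * n + 1) / 2 = n := by omega
        rw [h2]

theorem exists_Vv_lt (μ : ℕ → A → NNReal) (hμ : ∀ i : ℕ, ∑' a : A, μ i a = 1)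
    (Z : Set (List A)) (q : List A) (n : ℕ) (hq : q.length = 2 * n + 1)
    (hV : Vv μ Z q < 1) : ∃ a : A, Vv μ Z (q ++ [a]) < 1 := by
  by_contra hc
  push_neg at hc
  have h1 := hμ n
  have hs : Summable (μ n) := by
    by_contra hns
    rw [tsum_eq_zero_of_not_summable hns] at h1
    exact one_ne_zero h1.symm
  have hone : (1 : ℝ≥0∞) = ∑' a : A, (μ n a : ℝ≥0∞) := by
    rw [← ENNReal.coe_tsum hs, h1, ENNReal.coe_one]
  have hge : (1 : ℝ≥0∞) ≤ Vv μ Z q := by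
    calc (1 : ℝ≥0∞) = ∑' a : A, (μ n a : ℝ≥0∞) := hone
      _ = ∑' a : A, (μ n a : ℝ≥0∞) * 1 := by simp
      _ ≤ ∑' a : A, (μ n a : ℝ≥0∞) * Vv μ Z (q ++ [a]) :=
          ENNReal.tsum_le_tsum fun a => by gcongr; exact hc a
      _ ≤ Vv μ Z q := sum_le_Vv_odd μ Z q n hq
  exact absurd hV (not_lt.2 hge)

theorem Vv_nil (μ : ℕ → A → NNReal) (Z : Set (List A)) :
    Vv μ Z ([] : List A) = ∑' p : Z, ∏ i : Fin (p.1.length / 2),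
      (μ i.val (p.1.get ⟨2 * i.val + 1, by have := i.isLt; exact Nat.lt_of_lt_of_le (by omega) le_rfl⟩) : ℝ≥0∞) := by
  rw [Vv]
  simp only [List.length_nil, Nat.zero_div]
  rw [← Equiv.tsum_eq
    (⟨fun z => ⟨z.1, z.2, List.nil_prefix⟩, fun p => ⟨p.1, p.2.1⟩,
      fun z => rfl, fun p => rfl⟩ : Z ≃ {p : List A // p ∈ Z ∧ [] <+: p})
    (fun p : {p : List A // p ∈ Z ∧ [] <+: p} => wgt μ 0 p.1)]
  refine tsum_congr fun z => ?_
  show wgt μ 0 z.1 = _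
  unfold wgt
  exact Finset.prod_congr rfl fun i _ => if_pos (Nat.zero_le _)

def PrefixOfPlay' (p : List A) (x : ℕ → A) : Prop :=
  List.ofFn (fun i : Fin p.length => x i) = p

def Consistent2' (s₂ : List A → A) (x : ℕ → A) : Prop :=
  ∀ n : ℕ, x (2 * n + 1) = s₂ (List.ofFn (fun i : Fin (2 * n + 1) => x i))

theorem main_aux [Countable A] [Nonempty A]
    (μ : ℕ → A → NNReal) (hμ : ∀ i : ℕ, ∑' a : A, μ i a = 1) (Z : Set (List A))
    (h : ∑' p : Z, ∏ i : Fin (p.1.length / 2),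
        (μ i.val (p.1.get ⟨2 * i.val + 1, by have := i.isLt; exact Nat.lt_of_lt_of_le (by omega) le_rfl⟩) : ℝ≥0∞) < 1) :
    ∃ s₂ : List A → A, ∀ x : ℕ → A, Consistent2' s₂ x →
      ¬ ∃ p ∈ Z, PrefixOfPlay' p x := by
  classical
  set s₂ : List A → A := fun q =>
    if hq : ∃ a, Vv μ Z (q ++ [a]) < 1 then hq.choose else Classical.arbitrary A with hs₂
  refine ⟨s₂, fun x hx => ?_⟩
  have hlen : ∀ n : ℕ, (List.ofFn (fun i : Fin n => x i)).length = n := fun n => by simp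
  have hsucc : ∀ n : ℕ, List.ofFn (fun i : Fin (n + 1) => x i)
      = List.ofFn (fun i : Fin n => x i) ++ [x n] := fun n => by
    rw [List.ofFn_succ']
    simp [List.concat_eq_append]
  have key : ∀ n : ℕ, Vv μ Z (List.ofFn (fun i : Fin n => x i)) < 1 := by
    intro n
    induction n with
    | zero =>
      rw [show List.ofFn (fun i : Fin 0 => x i) = ([] : List A) from rfl, Vv_nil]
      exact h
    | succ n ih =>
      rw [hsucc n]
      rcases Nat.even_or_odd n with ⟨k, hk⟩ | ⟨k, hk⟩
      · exact lt_of_le_of_lt (Vv_append_le μ Z _ _ (by rw [hlen]; omega)) ih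
      · have hodd : (List.ofFn (fun i : Fin n => x i)).length = 2 * k + 1 := by
          rw [hlen]; omega
        have hex := exists_Vv_lt μ hμ Z _ k hodd ih
        have hxn : x n = s₂ (List.ofFn (fun i : Fin n => x i)) := by
          subst hk; exact hx k
        rw [hxn, hs₂]
        simp only []
        rw [dif_pos hex]
        exact hex.choose_spec
  rintro ⟨p, hpZ, hppre⟩
  have hp : List.ofFn (fun i : Fin p.length => x i) = p := hppre
  have h1 : 1 ≤ Vv μ Z (List.ofFn (fun i : Fin p.length => x i)) := by
    rw [hp]; exact Vv_ge_one μ Z p hpZ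
  exact absurd h1 (not_le.2 (key p.length))

end Aux

/-- If `(μⁱ)` is a sequence of probability mass functions on a countable alphabet `A`
and `∑'_{p = ⟨a₁,…,a_n⟩ ∈ Z} ∏_{i=1}^{⌊n/2⌋} μⁱ(a_{2i}) < 1`, then Player 2 has a
winning strategy for `Z`. (Here `μ i` is the pmf used for stage `i+1`, i.e. `μ^{i+1}`.) -/
theorem measures_sum_lt_one_imp_player2_wins [Countable A] [Nonempty A]
    (μ : ℕ → A → NNReal) (hμ : ∀ i : ℕ, ∑' a : A, μ i a = 1) (Z : Set (List A))
    (h : ∑' p : Z, ∏ i : Fin (p.1.length / 2),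
        (μ i.val (p.1.get ⟨2 * i.val + 1, by have := i.isLt; omega⟩) : ℝ≥0∞) < 1) :
    P2Wins Z :=
  main_aux μ hμ Z h
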